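/- Let n be a natural number, let ε and v be real numbers with 0 < ε ≤ 1/16 and 0 < v < 1, and set ε' = (16/15)·ε·(1−v). Let T_1,…,T_n ∈ [0,1] and let w¹, wᴹ, wᵐ : {1,…,n} → [0,1] satisfy, for every i: wᵐ_i ≤ w¹_i ≤ wᴹ_i, wᴹ_i ≤ w¹_i + ε, and wᵐ_i ≥ w¹_i − ε. Fix an index M. If Calibrate(wᵐ_M)·T_M > v and for every i ≠ M we have Calibrate(w¹_i)·T_i + ε' < Calibrate(w¹_M)·T_M − ε', then for every i ≠ M: Calibrate(wᴹ_i)·T_i < Calibrate(wᵐ_M)·T_M. -/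

import Mathlib

/-- The weight-calibration function with parameters `ε ∈ (0, 1/16]` and `v ∈ [0,1]`:
`Calibrate 0 = 0` and `Calibrate w = (w - ε)/(1 - ε) + v · (1 - w)/(1 - ε)` for
`0 < w ≤ 1`. -/
noncomputable def calibrate (ε v w : ℝ) : ℝ :=
  if w = 0 then 0 else (w - ε) / (1 - ε) + v * ((1 - w) / (1 - ε))

lemma caldiff (ε v : ℝ) (hε0 : 0 < ε) (hε : ε ≤ 1 / 16) (hv1 : v ≤ 1)
    (x y T : ℝ) (hx : x ≠ 0) (hy : y ≠ 0) (hxy : x ≤ y) (hyx : y ≤ x + ε)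
    (hT0 : 0 ≤ T) (hT1 : T ≤ 1) :
    calibrate ε v y * T ≤ calibrate ε v x * T + 16 / 15 * ε * (1 - v) := by
  have h1ε : (0:ℝ) < 1 - ε := by linarith
  have key : calibrate ε v y - calibrate ε v x = (y - x) * (1 - v) / (1 - ε) := by
    simp only [calibrate, if_neg hx, if_neg hy]
    field_simp
    ring
  have hkb : calibrate ε v y - calibrate ε v x ≤ 16 / 15 * ε * (1 - v) := by
    rw [key, div_le_iff₀ h1ε]
    nlinarith [mul_nonneg (mul_nonneg hε0.le (by linarith : (0:ℝ) ≤ 1 - v))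
        (by linarith : (0:ℝ) ≤ 1 / 16 - ε),
      mul_nonneg (by linarith : (0:ℝ) ≤ 1 - v) (by linarith : (0:ℝ) ≤ ε - (y - x))]
  have hk0 : 0 ≤ calibrate ε v y - calibrate ε v x := by
    rw [key]
    apply div_nonneg _ h1ε.le
    apply mul_nonneg <;> linarith
  nlinarith [mul_le_of_le_one_right hk0 hT1, mul_nonneg hk0 hT0]

/-- Let `n` be a natural number, `ε, v` reals with `0 < ε ≤ 1/16`, `0 < v < 1`, and
`ε' = (16/15) · ε · (1 - v)`.  Let `T_1, …, T_n ∈ [0,1]` and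
`w¹, wᴹ, wᵐ : {1,…,n} → [0,1]` with `wᵐ_i ≤ w¹_i ≤ wᴹ_i`, `wᴹ_i ≤ w¹_i + ε`,
`wᵐ_i ≥ w¹_i − ε` for every `i`.  Fix an index `M`.  If
`Calibrate(wᵐ_M)·T_M > v` and for every `i ≠ M` we have
`Calibrate(w¹_i)·T_i + ε' < Calibrate(w¹_M)·T_M − ε'`, then for every `i ≠ M`:
`Calibrate(wᴹ_i)·T_i < Calibrate(wᵐ_M)·T_M`. -/
theorem calibrated_winner_stable (n : ℕ) (ε v : ℝ) (hε0 : 0 < ε) (hε : ε ≤ 1 / 16)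
    (hv0 : 0 < v) (hv1 : v < 1)
    (ε' : ℝ) (hε' : ε' = 16 / 15 * ε * (1 - v))
    (T : Fin n → ℝ) (hT : ∀ i, T i ∈ Set.Icc (0 : ℝ) 1)
    (w1 wM wm : Fin n → ℝ)
    (hw1 : ∀ i, w1 i ∈ Set.Icc (0 : ℝ) 1)
    (hwM : ∀ i, wM i ∈ Set.Icc (0 : ℝ) 1)
    (hwm : ∀ i, wm i ∈ Set.Icc (0 : ℝ) 1)
    (horder : ∀ i, wm i ≤ w1 i ∧ w1 i ≤ wM i)
    (hMub : ∀ i, wM i ≤ w1 i + ε) (hmlb : ∀ i, w1 i - ε ≤ wm i)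
    (M : Fin n)
    (hMv : v < calibrate ε v (wm M) * T M)
    (hgap : ∀ i, i ≠ M →
      calibrate ε v (w1 i) * T i + ε' < calibrate ε v (w1 M) * T M - ε') :
    ∀ i, i ≠ M → calibrate ε v (wM i) * T i < calibrate ε v (wm M) * T M := by
  intro i hi
  have h1ε : (0:ℝ) < 1 - ε := by linarith
  obtain ⟨hTi0, hTi1⟩ := hT i
  obtain ⟨hTM0, hTM1⟩ := hT M
  have hwmM : wm M ≠ 0 := by
    intro h
    rw [h] at hMv
    simp [calibrate] at hMv
    linarith
  have hw1M : w1 M ≠ 0 := by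
    have := (horder M).1
    have := (hwm M).1
    intro h; apply hwmM; linarith
  by_cases h0 : wM i = 0
  · have hw1i : w1 i = 0 := by
      have := (horder i).2
      have := (hw1 i).1
      linarith
    have hz : calibrate ε v (wM i) * T i = 0 := by rw [h0]; simp [calibrate]
    rw [hz]; linarith
  · by_cases h1 : w1 i = 0
    · -- wM i ≤ ε, so calibrate (wM i) ≤ v
      have hle : wM i ≤ ε := by have := hMub i; linarith
      have hc0 : calibrate ε v (wM i) ≤ v := by
        simp only [calibrate, if_neg h0]
        rw [← mul_div_assoc, ← add_div, div_le_iff₀ h1ε]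
        nlinarith [mul_nonneg (by linarith : (0:ℝ) ≤ 1 - v)
          (by linarith : (0:ℝ) ≤ ε - wM i)]
      nlinarith [mul_nonneg (by linarith : (0:ℝ) ≤ v - calibrate ε v (wM i)) hTi0,
        mul_nonneg hv0.le (by linarith : (0:ℝ) ≤ 1 - T i)]
    · have hA := caldiff ε v hε0 hε hv1.le (w1 i) (wM i) (T i) h1 h0
        (horder i).2 (hMub i) hTi0 hTi1
      have hB := caldiff ε v hε0 hε hv1.le (wm M) (w1 M) (T M) hwmM hw1M
        (horder M).1 (by have := hmlb M; linarith) hTM0 hTM1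
      have := hgap i hi
      rw [hε'] at this
      linarith
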